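/- Asymptotic variance of the MM regression estimator in the SUR model (Theorem 2, regression part). Let ρ₁ be a ρ-function with constant c₁, ψ₁ = ρ₁', w₁(u) = ψ₁(u)/u. Assume E_K[‖X̃‖²] < ∞, Ω := E_K[Xᵀ Σ⁻¹ X] is invertible, and η₁ := E[(1 − 1/m) w₁(‖E‖_Σ) + (1/m) ψ₁'(‖E‖_Σ)] ≠ 0. Define the influence function IF_β(x̃, y) = (1/η₁) w₁(‖y − xβ‖_Σ) Ω⁻¹ xᵀ Σ⁻¹ (y − xβ), where x is the block-diagonal arrangement of x̃. Then ∫ IF_β(x̃, y) IF_β(x̃, y)ᵀ dH(x̃, y) = (α₁/(m η₁²)) Ω⁻¹, where α₁ := E[ψ₁(‖E‖_Σ)²]. -/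

import Mathlib

open MeasureTheory Matrix

noncomputable section

/-- The index set of the stacked coefficient vector of a SUR model with `m` blocks. -/
abbrev SURIdx (m : ℕ) (pdim : Fin m → ℕ) : Type := (j : Fin m) × Fin (pdim j)

/-- A ρ-function with tuning constant `c`. -/
def IsRhoFunction (ρ : ℝ → ℝ) (c : ℝ) : Prop :=
  0 < c ∧ (∀ u, ρ (-u) = ρ u) ∧ ContDiff ℝ 2 ρ ∧ ρ 0 = 0 ∧
    StrictMonoOn ρ (Set.Icc 0 c) ∧ ∀ u, c ≤ u → ρ u = ρ c

/-- `‖a‖_C = √(aᵀ C⁻¹ a)`. -/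
def mnorm {m : ℕ} (C : Matrix (Fin m) (Fin m) ℝ) (a : Fin m → ℝ) : ℝ :=
  Real.sqrt (a ⬝ᵥ C⁻¹.mulVec a)

/-- The `m × p` block-diagonal arrangement of a regressor vector. -/
def blockArrange {m : ℕ} {pdim : Fin m → ℕ} (x : SURIdx m pdim → ℝ) :
    Matrix (Fin m) (SURIdx m pdim) ℝ :=
  Matrix.of fun j q => if q.1 = j then x q else 0

/-- Orthogonal invariance of a measure on `ℝ^m`. -/
def OrthoInvariant {m : ℕ} (μ : Measure (Fin m → ℝ)) : Prop :=
  ∀ O : Matrix (Fin m) (Fin m) ℝ, Oᵀ * O = 1 → μ.map O.mulVec = μ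

/-! ### auxiliary lemmas -/

lemma psi_cont {ρ : ℝ → ℝ} {c : ℝ} (h : IsRhoFunction ρ c) : Continuous (deriv ρ) :=
  (h.2.2.1.iterate_deriv' 1 1).continuous

lemma psi_odd {ρ : ℝ → ℝ} {c : ℝ} (h : IsRhoFunction ρ c) (u : ℝ) :
    deriv ρ (-u) = - deriv ρ u := by
  have h1 : (fun x : ℝ => ρ (-x)) = ρ := funext h.2.1
  have := deriv_comp_neg ρ u
  rw [h1] at this
  linarith

lemma psi_vanish {ρ : ℝ → ℝ} {c : ℝ} (h : IsRhoFunction ρ c) {u : ℝ} (hu : c ≤ u) :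
    deriv ρ u = 0 := by
  have hgt : ∀ v : ℝ, c < v → deriv ρ v = 0 := by
    intro v hv
    have hev : ρ =ᶠ[nhds v] fun _ => ρ c := by
      filter_upwards [Ioi_mem_nhds hv] with t ht
      exact h.2.2.2.2.2 t (le_of_lt ht)
    rw [hev.deriv_eq, deriv_const]
  rcases eq_or_lt_of_le hu with rfl | hlt
  · have h1 : Filter.Tendsto (deriv ρ) (nhdsWithin c (Set.Ioi c)) (nhds (deriv ρ c)) :=
      ((psi_cont h).continuousAt).continuousWithinAt
    have h2 : Filter.Tendsto (deriv ρ) (nhdsWithin c (Set.Ioi c)) (nhds 0) := by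
      apply Filter.Tendsto.congr' _ tendsto_const_nhds
      filter_upwards [self_mem_nhdsWithin] with t ht
      exact (hgt t ht).symm
    exact tendsto_nhds_unique h1 h2
  · exact hgt u hlt

lemma psi_bound {ρ : ℝ → ℝ} {c : ℝ} (h : IsRhoFunction ρ c) :
    ∃ C : ℝ, 0 ≤ C ∧ ∀ u, |deriv ρ u| ≤ C := by
  obtain ⟨C, hC⟩ := (isCompact_Icc (a := -c) (b := c)).exists_bound_of_continuousOn
    (psi_cont h).continuousOn
  refine ⟨max C 0, le_max_right _ _, fun u => ?_⟩
  by_cases hu : u ∈ Set.Icc (-c) c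
  · exact le_trans (hC u hu) (le_max_left _ _)
  · have : deriv ρ u = 0 := by
      rcases lt_or_ge u (-c) with hlt | hge
      · have : deriv ρ (-u) = 0 := psi_vanish h (by linarith)
        rw [psi_odd h u] at this; linarith
      · rcases le_or_gt c u with h1 | h1
        · exact psi_vanish h h1
        · exact absurd ⟨hge, le_of_lt h1⟩ hu
    simp [this, le_max_right]

lemma w_cont {ρ w : ℝ → ℝ} {c : ℝ} (h : IsRhoFunction ρ c)
    (hw : ∀ u : ℝ, u ≠ 0 → w u = deriv ρ u / u) (hw0 : ContinuousAt w 0) :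
    Continuous w := by
  rw [continuous_iff_continuousAt]
  intro u
  by_cases hu : u = 0
  · rwa [hu]
  · have hev : w =ᶠ[nhds u] fun v => deriv ρ v / v := by
      filter_upwards [isOpen_compl_singleton.mem_nhds hu] with t ht
      exact hw t ht
    exact ContinuousAt.congr (((psi_cont h).continuousAt).div continuousAt_id hu) hev.symm

lemma w_mul_self {ρ w : ℝ → ℝ} {c : ℝ} (h : IsRhoFunction ρ c)
    (hw : ∀ u : ℝ, u ≠ 0 → w u = deriv ρ u / u) (u : ℝ) :
    w u * u = deriv ρ u := by
  by_cases hu : u = 0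
  · subst hu
    have := psi_odd h 0
    simp at this ⊢
    linarith
  · rw [hw u hu]; field_simp

lemma cont_dot {m : ℕ} : Continuous fun z : Fin m → ℝ => z ⬝ᵥ z := by
  simp only [dotProduct]
  fun_prop

lemma dot_self_nonneg {m : ℕ} (z : Fin m → ℝ) : (0:ℝ) ≤ z ⬝ᵥ z := by
  simp only [dotProduct]
  exact Finset.sum_nonneg fun i _ => mul_self_nonneg (z i)

lemma dot_ortho {m : ℕ} {O : Matrix (Fin m) (Fin m) ℝ} (hO : Oᵀ * O = 1) (z : Fin m → ℝ) :
    (O.mulVec z) ⬝ᵥ (O.mulVec z) = z ⬝ᵥ z := by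
  rw [Matrix.dotProduct_mulVec, ← Matrix.mulVec_transpose, Matrix.mulVec_mulVec, hO,
    Matrix.one_mulVec]

lemma mulVec_cont {m n : ℕ} (O : Matrix (Fin m) (Fin n) ℝ) : Continuous O.mulVec := by
  have : O.mulVec = fun z => fun i => ∑ j, O i j * z j := by
    funext z i
    simp [Matrix.mulVec, dotProduct]
  rw [this]
  fun_prop

lemma integral_ortho {m : ℕ} {ν : Measure (Fin m → ℝ)} (hν : OrthoInvariant ν)
    {O : Matrix (Fin m) (Fin m) ℝ} (hO : Oᵀ * O = 1) {f : (Fin m → ℝ) → ℝ}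
    (hf : Continuous f) :
    ∫ z, f z ∂ν = ∫ z, f (O.mulVec z) ∂ν := by
  conv_lhs => rw [← hν O hO]
  exact integral_map (mulVec_cont O).aemeasurable hf.aestronglyMeasurable

lemma coord_le_sqrt {m : ℕ} (z : Fin m → ℝ) (k : Fin m) : |z k| ≤ Real.sqrt (z ⬝ᵥ z) := by
  rw [← Real.sqrt_sq_eq_abs]
  apply Real.sqrt_le_sqrt
  simp only [dotProduct]
  rw [sq (z k)]
  exact Finset.single_le_sum (fun i _ => mul_self_nonneg (z i)) (Finset.mem_univ k)

lemma sphere_fun_cont {m : ℕ} (g : ℝ → ℝ) (hg : Continuous g) (k l : Fin m) :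
    Continuous (fun z : Fin m → ℝ => g (Real.sqrt (z ⬝ᵥ z)) * z k * z l) := by
  have h1 : Continuous fun z : Fin m → ℝ => z ⬝ᵥ z := cont_dot
  fun_prop

lemma sphere_fun_integrable {m : ℕ} {ν : Measure (Fin m → ℝ)} [IsProbabilityMeasure ν]
    (g : ℝ → ℝ) (hg : Continuous g) (C : ℝ)
    (hC : ∀ u : ℝ, 0 ≤ u → |g u| * u ^ 2 ≤ C) (k l : Fin m) :
    Integrable (fun z : Fin m → ℝ => g (Real.sqrt (z ⬝ᵥ z)) * z k * z l) ν := by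
  apply Integrable.mono' (integrable_const C)
    (sphere_fun_cont g hg k l).aestronglyMeasurable
  filter_upwards with z
  have h0 : (0:ℝ) ≤ z ⬝ᵥ z := dot_self_nonneg z
  have h1 : |z k| ≤ Real.sqrt (z ⬝ᵥ z) := coord_le_sqrt z k
  have h2 : |z l| ≤ Real.sqrt (z ⬝ᵥ z) := coord_le_sqrt z l
  have hs : Real.sqrt (z ⬝ᵥ z) ^ 2 = z ⬝ᵥ z := Real.sq_sqrt h0
  calc ‖g (Real.sqrt (z ⬝ᵥ z)) * z k * z l‖
      = |g (Real.sqrt (z ⬝ᵥ z))| * |z k| * |z l| := by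
        rw [Real.norm_eq_abs, abs_mul, abs_mul]
    _ ≤ |g (Real.sqrt (z ⬝ᵥ z))| * Real.sqrt (z ⬝ᵥ z) * Real.sqrt (z ⬝ᵥ z) := by
        apply mul_le_mul _ h2 (abs_nonneg _) _
        · exact mul_le_mul le_rfl h1 (abs_nonneg _) (abs_nonneg _)
        · positivity
    _ = |g (Real.sqrt (z ⬝ᵥ z))| * Real.sqrt (z ⬝ᵥ z) ^ 2 := by ring
    _ ≤ C := hC _ (Real.sqrt_nonneg _)

lemma sphereMoment {m : ℕ} (hm : 0 < m) {ν : Measure (Fin m → ℝ)} [IsProbabilityMeasure ν]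
    (hν : OrthoInvariant ν) (g : ℝ → ℝ) (hg : Continuous g) (C : ℝ)
    (hC : ∀ u : ℝ, 0 ≤ u → |g u| * u ^ 2 ≤ C) (k l : Fin m) :
    ∫ z, g (Real.sqrt (z ⬝ᵥ z)) * z k * z l ∂ν =
      if k = l then (1 / (m:ℝ)) * ∫ z, g (Real.sqrt (z ⬝ᵥ z)) * (z ⬝ᵥ z) ∂ν else 0 := by
  by_cases hkl : k = l
  · subst hkl
    simp only [if_pos rfl, ↓reduceIte]
    have hdiag : ∀ k' : Fin m, ∫ z, g (Real.sqrt (z ⬝ᵥ z)) * z k' * z k' ∂ν =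
        ∫ z, g (Real.sqrt (z ⬝ᵥ z)) * z k * z k ∂ν := by
      intro k'
      set σ := Equiv.swap k' k with hσ
      set O : Matrix (Fin m) (Fin m) ℝ := Matrix.of fun a b => if σ a = b then 1 else 0 with hOdef
      have hO : Oᵀ * O = 1 := by
        ext a b
        simp only [Matrix.mul_apply, Matrix.transpose_apply, hOdef, Matrix.of_apply,
          ite_mul, one_mul, zero_mul]
        rw [← Equiv.sum_comp σ.symm (fun j => if σ j = a then (if σ j = b then (1:ℝ) else 0) else 0)]
        simp [Matrix.one_apply, Finset.sum_ite_eq']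
      have hmv : ∀ z : Fin m → ℝ, O.mulVec z = fun a => z (σ a) := by
        intro z
        funext a
        simp [hOdef, Matrix.mulVec, dotProduct, ite_mul, one_mul, zero_mul]
      have heq := integral_ortho hν hO (sphere_fun_cont g hg k' k')
      rw [heq]
      congr 1
      funext z
      rw [dot_ortho hO z, hmv z]
      simp [hσ, Equiv.swap_apply_left]
    have hsum : ∫ z, g (Real.sqrt (z ⬝ᵥ z)) * (z ⬝ᵥ z) ∂ν =
        ∑ k' : Fin m, ∫ z, g (Real.sqrt (z ⬝ᵥ z)) * z k' * z k' ∂ν := by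
      rw [← integral_finset_sum _ (fun k' _ => sphere_fun_integrable g hg C hC k' k')]
      congr 1
      funext z
      simp only [dotProduct, Finset.mul_sum]
      exact Finset.sum_congr rfl fun i _ => by ring
    rw [hsum]
    rw [Finset.sum_congr rfl fun k' _ => hdiag k']
    simp only [Finset.sum_const, Finset.card_univ, Fintype.card_fin, nsmul_eq_mul]
    field_simp
  · simp only [if_neg hkl]
    set O : Matrix (Fin m) (Fin m) ℝ := Matrix.diagonal (fun i => if i = k then -1 else 1) with hOdef
    have hO : Oᵀ * O = 1 := by
      rw [hOdef, Matrix.diagonal_transpose, Matrix.diagonal_mul_diagonal]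
      have : (fun i : Fin m => (if i = k then (-1:ℝ) else 1) * (if i = k then -1 else 1)) =
          fun _ => (1:ℝ) := by
        funext i; by_cases hi : i = k <;> simp [hi]
      rw [this, Matrix.diagonal_one]
    have hI := integral_ortho hν hO (sphere_fun_cont g hg k l)
    have hneg : ∀ z : Fin m → ℝ,
        g (Real.sqrt ((O.mulVec z) ⬝ᵥ (O.mulVec z))) * (O.mulVec z) k * (O.mulVec z) l
          = - (g (Real.sqrt (z ⬝ᵥ z)) * z k * z l) := by
      intro z
      rw [dot_ortho hO z]
      have h1 : (O.mulVec z) k = - z k := by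
        rw [hOdef, Matrix.mulVec_diagonal]; simp
      have h2 : (O.mulVec z) l = z l := by
        rw [hOdef, Matrix.mulVec_diagonal, if_neg (fun h => hkl h.symm), one_mul]
      rw [h1, h2]; ring
    simp only [hneg, integral_neg] at hI
    linarith

lemma blockT_mulVec {m : ℕ} {pdim : Fin m → ℕ} (x : SURIdx m pdim → ℝ)
    (v : Fin m → ℝ) (q : SURIdx m pdim) :
    (blockArrange x)ᵀ.mulVec v q = x q * v q.1 := by
  simp only [Matrix.mulVec, dotProduct, Matrix.transpose_apply, blockArrange, Matrix.of_apply,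
    ite_mul, zero_mul]
  rw [Finset.sum_ite_eq Finset.univ q.1 (fun j => x q * v j)]
  simp

lemma block_quad {m : ℕ} {pdim : Fin m → ℕ} (x : SURIdx m pdim → ℝ)
    (M : Matrix (Fin m) (Fin m) ℝ) (q r : SURIdx m pdim) :
    ((blockArrange x)ᵀ * M * blockArrange x) q r = M q.1 r.1 * (x q * x r) := by
  simp only [Matrix.mul_apply, Matrix.transpose_apply, blockArrange, Matrix.of_apply,
    ite_mul, mul_ite, zero_mul, mul_zero, Finset.sum_ite_eq, Finset.mem_univ, if_true]
  ring

set_option maxHeartbeats 1600000 in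
/-- **Asymptotic variance of the MM regression estimator in the SUR model**
(Theorem 2, regression part): `∫ IF_β IF_βᵀ dH = (α₁/(m η₁²)) Ω⁻¹`. -/
theorem asymptotic_variance_MM_regression
    {m : ℕ} (hm : 1 < m) {pdim : Fin m → ℕ}
    (ρ₁ : ℝ → ℝ) (c₁ : ℝ) (hρ₁ : IsRhoFunction ρ₁ c₁)
    (w₁ : ℝ → ℝ) (hw₁ : ∀ u : ℝ, u ≠ 0 → w₁ u = deriv ρ₁ u / u)
    (hw₁c : ContinuousAt w₁ 0)
    (K : Measure (SURIdx m pdim → ℝ)) [IsProbabilityMeasure K]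
    (hK2 : Integrable (fun x => ∑ q, (x q) ^ 2) K)
    (Sig : Matrix (Fin m) (Fin m) ℝ) (hSig : Sig.PosDef)
    (β : SURIdx m pdim → ℝ)
    (ν : Measure (Fin m → ℝ)) [IsProbabilityMeasure ν] (hν : OrthoInvariant ν)
    (A : Matrix (Fin m) (Fin m) ℝ) (hA : A * Aᵀ = Sig)
    (F : Measure (Fin m → ℝ)) (hF : F = ν.map A.mulVec)
    (H : Measure ((SURIdx m pdim → ℝ) × (Fin m → ℝ)))
    (hH : H = (K.prod F).map fun q => (q.1, (blockArrange q.1).mulVec β + q.2))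
    -- Ω = E_K[Xᵀ Σ⁻¹ X], assumed invertible
    (Ω : Matrix (SURIdx m pdim) (SURIdx m pdim) ℝ)
    (hΩ : Ω = Matrix.of fun q r =>
      ∫ x, ((blockArrange x)ᵀ * Sig⁻¹ * blockArrange x) q r ∂K)
    (hΩu : IsUnit Ω.det)
    -- η₁ ≠ 0
    (η₁ : ℝ)
    (hη : η₁ = ∫ e, ((1 - 1 / (m : ℝ)) * w₁ (mnorm Sig e)
        + (1 / (m : ℝ)) * deriv (deriv ρ₁) (mnorm Sig e)) ∂F)
    (hη0 : η₁ ≠ 0)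
    -- the influence function IF_β
    (IFβ : (SURIdx m pdim → ℝ) × (Fin m → ℝ) → SURIdx m pdim → ℝ)
    (hIF : ∀ zy : (SURIdx m pdim → ℝ) × (Fin m → ℝ),
      IFβ zy = ((1 / η₁) * w₁ (mnorm Sig (zy.2 - (blockArrange zy.1).mulVec β))) •
        (Ω⁻¹.mulVec ((blockArrange zy.1)ᵀ.mulVec
          (Sig⁻¹.mulVec (zy.2 - (blockArrange zy.1).mulVec β)))))
    -- α₁ = E[ψ₁(‖E‖_Σ)²]
    (α₁ : ℝ) (hα : α₁ = ∫ e, (deriv ρ₁ (mnorm Sig e)) ^ 2 ∂F) :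
    (Matrix.of fun q r : SURIdx m pdim => ∫ zy, IFβ zy q * IFβ zy r ∂H) =
      (α₁ / ((m : ℝ) * η₁ ^ 2)) • Ω⁻¹ := by
  classical
  have hm' : 0 < m := lt_trans Nat.zero_lt_one hm
  have hmne : (m : ℝ) ≠ 0 := Nat.cast_ne_zero.mpr hm'.ne'
  -- matrix facts
  have hSigdet : IsUnit Sig.det := isUnit_iff_ne_zero.mpr (ne_of_gt hSig.det_pos)
  have hAdet : IsUnit A.det := by
    refine isUnit_iff_ne_zero.mpr fun h => ?_
    have h2 : Sig.det = A.det * Aᵀ.det := by rw [← hA, Matrix.det_mul]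
    rw [Matrix.det_transpose, h, mul_zero] at h2
    exact (ne_of_gt hSig.det_pos) h2
  have hATdet : IsUnit Aᵀ.det := by rwa [Matrix.det_transpose]
  have hSigT : Sigᵀ = Sig := by rw [← hA, Matrix.transpose_mul, Matrix.transpose_transpose]
  have hSigiT : (Sig⁻¹)ᵀ = Sig⁻¹ := by rw [Matrix.transpose_nonsing_inv, hSigT]
  have hATSA : Aᵀ * Sig⁻¹ * A = 1 := by
    calc Aᵀ * Sig⁻¹ * A = Aᵀ * ((Aᵀ)⁻¹ * A⁻¹) * A := by rw [← hA, Matrix.mul_inv_rev]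
      _ = (Aᵀ * (Aᵀ)⁻¹) * (A⁻¹ * A) := by simp only [Matrix.mul_assoc]
      _ = 1 := by
          rw [Matrix.mul_nonsing_inv _ hATdet, Matrix.nonsing_inv_mul _ hAdet, Matrix.one_mul]
  have hSS : (Sig⁻¹ * A) * (Sig⁻¹ * A)ᵀ = Sig⁻¹ := by
    rw [Matrix.transpose_mul, hSigiT, Matrix.mul_assoc, ← Matrix.mul_assoc A Aᵀ Sig⁻¹, hA,
      Matrix.mul_nonsing_inv _ hSigdet, Matrix.mul_one]
  have hBB : ∀ i i' : Fin m, (∑ k, (Sig⁻¹ * A) i k * (Sig⁻¹ * A) i' k) = Sig⁻¹ i i' := by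
    intro i i'
    have h1 : ((Sig⁻¹ * A) * (Sig⁻¹ * A)ᵀ) i i'
        = ∑ k, (Sig⁻¹ * A) i k * (Sig⁻¹ * A) i' k := by
      simp only [Matrix.mul_apply, Matrix.transpose_apply]
    rw [← h1, hSS]
  have hmnormA : ∀ z : Fin m → ℝ, mnorm Sig (A.mulVec z) = Real.sqrt (z ⬝ᵥ z) := by
    intro z
    show Real.sqrt _ = Real.sqrt _
    congr 1
    rw [Matrix.mulVec_mulVec, Matrix.dotProduct_mulVec, ← Matrix.mulVec_transpose,
      Matrix.mulVec_mulVec, Matrix.transpose_mul, hSigiT, hATSA, Matrix.one_mulVec]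
  -- psi and w facts
  have hψc : Continuous (deriv ρ₁) := psi_cont hρ₁
  obtain ⟨Cψ, hCψ0, hCψ⟩ := psi_bound hρ₁
  have hwc : Continuous w₁ := w_cont hρ₁ hw₁ hw₁c
  have hwmul : ∀ u, w₁ u * u = deriv ρ₁ u := w_mul_self hρ₁ hw₁
  have hgC : ∀ u : ℝ, 0 ≤ u → |(fun u => w₁ u ^ 2) u| * u ^ 2 ≤ Cψ ^ 2 := by
    intro u hu
    have h1 : |w₁ u ^ 2| * u ^ 2 = (w₁ u * u) ^ 2 := by
      rw [abs_of_nonneg (sq_nonneg _)]; ring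
    show |w₁ u ^ 2| * u ^ 2 ≤ Cψ ^ 2
    rw [h1, hwmul]
    calc (deriv ρ₁ u) ^ 2 = |deriv ρ₁ u| ^ 2 := (sq_abs _).symm
      _ ≤ Cψ ^ 2 := pow_le_pow_left₀ (abs_nonneg _) (hCψ u) 2
  -- continuity infrastructure
  have hqf : Continuous fun a : Fin m → ℝ => a ⬝ᵥ Sig⁻¹.mulVec a := by
    have h1 : (fun a : Fin m → ℝ => a ⬝ᵥ Sig⁻¹.mulVec a)
        = fun a => ∑ i, a i * ∑ j, Sig⁻¹ i j * a j := by
      funext a; simp [dotProduct, Matrix.mulVec]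
    rw [h1]; fun_prop
  have hmnc : Continuous (mnorm Sig) := Real.continuous_sqrt.comp hqf
  have hcXβ : Continuous fun x : SURIdx m pdim → ℝ => (blockArrange x).mulVec β := by
    apply continuous_pi; intro j
    have h1 : (fun x : SURIdx m pdim → ℝ => (blockArrange x).mulVec β j)
        = fun x => ∑ q', (if q'.1 = j then x q' else 0) * β q' := by
      funext x; simp [Matrix.mulVec, dotProduct, blockArrange]
    rw [h1]
    apply continuous_finset_sum; intro q' _
    by_cases h : q'.1 = j
    · simp only [if_pos h]; exact (continuous_apply q').mul continuous_const
    · simp only [if_neg h, zero_mul]; exact continuous_const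
  have hEc : Continuous fun zy : (SURIdx m pdim → ℝ) × (Fin m → ℝ) =>
      zy.2 - (blockArrange zy.1).mulVec β := continuous_snd.sub (hcXβ.comp continuous_fst)
  have hIFqc : ∀ q0 : SURIdx m pdim, Continuous fun zy => IFβ zy q0 := by
    intro q0
    have hform : (fun zy => IFβ zy q0) = fun zy : (SURIdx m pdim → ℝ) × (Fin m → ℝ) =>
        ((1 / η₁) * w₁ (mnorm Sig (zy.2 - (blockArrange zy.1).mulVec β))) *
          ∑ s, Ω⁻¹ q0 s * (zy.1 s *
            ∑ j, Sig⁻¹ s.1 j * (zy.2 - (blockArrange zy.1).mulVec β) j) := by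
      funext zy
      rw [hIF zy, Pi.smul_apply, smul_eq_mul]
      congr 1
      have h2 : Ω⁻¹.mulVec ((blockArrange zy.1)ᵀ.mulVec
            (Sig⁻¹.mulVec (zy.2 - (blockArrange zy.1).mulVec β))) q0
          = ∑ s, Ω⁻¹ q0 s * ((blockArrange zy.1)ᵀ.mulVec
              (Sig⁻¹.mulVec (zy.2 - (blockArrange zy.1).mulVec β)) s) := by
        simp [Matrix.mulVec, dotProduct]
      rw [h2]
      refine Finset.sum_congr rfl fun s _ => ?_
      rw [blockT_mulVec]
      have h3 : Sig⁻¹.mulVec (zy.2 - (blockArrange zy.1).mulVec β) s.1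
          = ∑ j, Sig⁻¹ s.1 j * (zy.2 - (blockArrange zy.1).mulVec β) j := by
        simp [Matrix.mulVec, dotProduct]
      rw [h3]
    rw [hform]
    apply Continuous.mul
    · exact continuous_const.mul (hwc.comp (hmnc.comp hEc))
    · apply continuous_finset_sum; intro s _
      exact continuous_const.mul (((continuous_apply s).comp continuous_fst).mul
        (continuous_finset_sum _ fun j _ =>
          continuous_const.mul ((continuous_apply j).comp hEc)))
  -- the transport map
  set Tmap : (SURIdx m pdim → ℝ) × (Fin m → ℝ) → (SURIdx m pdim → ℝ) × (Fin m → ℝ) :=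
    fun p => (p.1, (blockArrange p.1).mulVec β + A.mulVec p.2) with hTmapdef
  have hTc : Continuous Tmap :=
    Continuous.prodMk continuous_fst
      ((hcXβ.comp continuous_fst).add ((mulVec_cont A).comp continuous_snd))
  have hHmap : H = (K.prod ν).map Tmap := by
    rw [hH, hF]
    have h1 : K.prod (ν.map A.mulVec) = (K.prod ν).map (Prod.map id A.mulVec) := by
      have h2 := Measure.map_prod_map (f := (id : (SURIdx m pdim → ℝ) → _))
        (g := A.mulVec) K ν measurable_id (mulVec_cont A).measurable
      rwa [Measure.map_id] at h2
    have hT1m : Measurable fun q : (SURIdx m pdim → ℝ) × (Fin m → ℝ) =>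
        (q.1, (blockArrange q.1).mulVec β + q.2) :=
      (Continuous.prodMk continuous_fst
        ((hcXβ.comp continuous_fst).add continuous_snd)).measurable
    rw [h1, Measure.map_map hT1m (measurable_id.prodMap (mulVec_cont A).measurable)]
    congr 1
  have hred : ∀ q0 r0 : SURIdx m pdim, (∫ zy, IFβ zy q0 * IFβ zy r0 ∂H)
      = ∫ p, IFβ (Tmap p) q0 * IFβ (Tmap p) r0 ∂(K.prod ν) := by
    intro q0 r0
    rw [hHmap]
    exact integral_map hTc.aemeasurable ((hIFqc q0).mul (hIFqc r0)).aestronglyMeasurable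
  -- coefficients
  set B : Matrix (Fin m) (Fin m) ℝ := Sig⁻¹ * A with hBdef
  set d : SURIdx m pdim → (SURIdx m pdim × Fin m) → ℝ :=
    fun q0 a => Ω⁻¹ q0 a.1 * B a.1.1 a.2 with hddef
  have hIFT : ∀ (p : (SURIdx m pdim → ℝ) × (Fin m → ℝ)) (q0 : SURIdx m pdim),
      IFβ (Tmap p) q0 = ((1 / η₁) * w₁ (Real.sqrt (p.2 ⬝ᵥ p.2))) *
        ∑ a : SURIdx m pdim × Fin m, d q0 a * p.1 a.1 * p.2 a.2 := by
    intro p q0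
    obtain ⟨x, z⟩ := p
    rw [hIF]
    simp only [hTmapdef, Pi.smul_apply, smul_eq_mul]
    rw [show (blockArrange x).mulVec β + A.mulVec z - (blockArrange x).mulVec β
        = A.mulVec z from by abel]
    rw [hmnormA]
    congr 1
    rw [Matrix.mulVec_mulVec z Sig⁻¹ A, ← hBdef]
    have h2 : Ω⁻¹.mulVec ((blockArrange x)ᵀ.mulVec (B.mulVec z)) q0
        = ∑ s, Ω⁻¹ q0 s * ((blockArrange x)ᵀ.mulVec (B.mulVec z) s) := by
      simp [Matrix.mulVec, dotProduct]
    rw [h2, Fintype.sum_prod_type]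
    refine Finset.sum_congr rfl fun s _ => ?_
    rw [blockT_mulVec]
    have h3 : B.mulVec z s.1 = ∑ k, B s.1 k * z k := by simp [Matrix.mulVec, dotProduct]
    rw [h3, Finset.mul_sum, Finset.mul_sum]
    refine Finset.sum_congr rfl fun k _ => ?_
    simp only [hddef]
    ring
  -- spherical integrals
  have hGint : ∀ k l : Fin m,
      Integrable (fun z : Fin m → ℝ => w₁ (Real.sqrt (z ⬝ᵥ z)) ^ 2 * z k * z l) ν := by
    intro k l
    simpa using sphere_fun_integrable (ν := ν) (fun u => w₁ u ^ 2) (hwc.pow 2) (Cψ ^ 2) hgC k l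
  have hαν : α₁ = ∫ z, deriv ρ₁ (Real.sqrt (z ⬝ᵥ z)) ^ 2 ∂ν := by
    have hcont2 : Continuous fun e : Fin m → ℝ => deriv ρ₁ (mnorm Sig e) ^ 2 := by
      exact (hψc.comp hmnc).pow 2
    rw [hα, hF, integral_map (mulVec_cont A).aemeasurable hcont2.aestronglyMeasurable]
    congr 1; funext z; rw [hmnormA]
  have hTint : ∫ z, w₁ (Real.sqrt (z ⬝ᵥ z)) ^ 2 * (z ⬝ᵥ z) ∂ν = α₁ := by
    rw [hαν]; congr 1; funext z
    have h0 : (0:ℝ) ≤ z ⬝ᵥ z := dot_self_nonneg z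
    have h1 := hwmul (Real.sqrt (z ⬝ᵥ z))
    calc w₁ (Real.sqrt (z ⬝ᵥ z)) ^ 2 * (z ⬝ᵥ z)
        = (w₁ (Real.sqrt (z ⬝ᵥ z)) * Real.sqrt (z ⬝ᵥ z)) ^ 2 := by
          rw [mul_pow, Real.sq_sqrt h0]
      _ = deriv ρ₁ (Real.sqrt (z ⬝ᵥ z)) ^ 2 := by rw [h1]
  have hGν : ∀ k l : Fin m, (∫ z, w₁ (Real.sqrt (z ⬝ᵥ z)) ^ 2 * z k * z l ∂ν)
      = if k = l then (1 / (m:ℝ)) * α₁ else 0 := by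
    intro k l
    have h1 := sphereMoment hm' hν (fun u => w₁ u ^ 2) (hwc.pow 2) (Cψ ^ 2) hgC k l
    rw [h1, hTint]
  -- K-side integrability and Omega entries
  have hxint : ∀ s t : SURIdx m pdim, Integrable (fun x => x s * x t) K := by
    intro s t
    apply Integrable.mono' hK2
      (((continuous_apply s).mul (continuous_apply t)).aestronglyMeasurable)
    filter_upwards with x
    have hs : x s ^ 2 ≤ ∑ q, x q ^ 2 :=
      Finset.single_le_sum (fun i _ => sq_nonneg (x i)) (Finset.mem_univ s)
    have ht : x t ^ 2 ≤ ∑ q, x q ^ 2 :=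
      Finset.single_le_sum (fun i _ => sq_nonneg (x i)) (Finset.mem_univ t)
    have h1 : |x s * x t| ≤ (x s ^ 2 + x t ^ 2) / 2 := by
      rcases le_or_gt 0 (x s * x t) with h | h
      · rw [abs_of_nonneg h]; nlinarith [sq_nonneg (x s - x t)]
      · rw [abs_of_neg h]; nlinarith [sq_nonneg (x s + x t)]
    rw [Real.norm_eq_abs]; exact h1.trans (by linarith)
  set κ : SURIdx m pdim → SURIdx m pdim → ℝ := fun s t => ∫ x, x s * x t ∂K with hκdef
  have hΩentry : ∀ s t : SURIdx m pdim, Ω s t = Sig⁻¹ s.1 t.1 * κ s t := by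
    intro s t
    rw [hΩ]
    calc (Matrix.of fun q r => ∫ x,
          ((blockArrange x)ᵀ * Sig⁻¹ * blockArrange x) q r ∂K) s t
        = ∫ x, ((blockArrange x)ᵀ * Sig⁻¹ * blockArrange x) s t ∂K := rfl
      _ = ∫ x, Sig⁻¹ s.1 t.1 * (x s * x t) ∂K := by
          congr 1; funext x; exact block_quad x Sig⁻¹ s t
      _ = Sig⁻¹ s.1 t.1 * κ s t := integral_const_mul _ _
  have hκsymm : ∀ s t, κ s t = κ t s := by
    intro s t
    simp only [hκdef]; congr 1; funext x; ring
  have hΩsym : Ωᵀ = Ω := by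
    ext s t
    rw [Matrix.transpose_apply, hΩentry, hΩentry]
    have h1 : Sig⁻¹ t.1 s.1 = Sig⁻¹ s.1 t.1 := by
      conv_lhs => rw [← hSigiT]
      exact Matrix.transpose_apply _ _ _
    rw [h1, hκsymm t s]
  have hΩinvsym : (Ω⁻¹)ᵀ = Ω⁻¹ := by rw [Matrix.transpose_nonsing_inv, hΩsym]
  have hΩis : ∀ a b, Ω⁻¹ a b = Ω⁻¹ b a := fun a b => by
    conv_lhs => rw [← hΩinvsym]
    exact Matrix.transpose_apply _ _ _
  have hfin : ∀ q0 r0 : SURIdx m pdim,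
      (∑ s, ∑ t, Ω⁻¹ q0 s * (Ω s t * Ω⁻¹ t r0)) = Ω⁻¹ q0 r0 := by
    intro q0 r0
    have h1 : (Ω⁻¹ * (Ω * Ω⁻¹)) q0 r0 = ∑ s, ∑ t, Ω⁻¹ q0 s * (Ω s t * Ω⁻¹ t r0) := by
      simp [Matrix.mul_apply, Finset.mul_sum]
    rw [← h1, Matrix.mul_nonsing_inv _ hΩu, Matrix.mul_one]
  -- the core computation
  have hcore : ∀ q0 r0 : SURIdx m pdim,
      (∫ p, IFβ (Tmap p) q0 * IFβ (Tmap p) r0 ∂(K.prod ν))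
        = ∑ c : (SURIdx m pdim × Fin m) × (SURIdx m pdim × Fin m),
            (d q0 c.1 * d r0 c.2 * κ c.1.1 c.2.1) *
              ((1/η₁)^2 * (if c.1.2 = c.2.2 then (1/(m:ℝ)) * α₁ else 0)) := by
    intro q0 r0
    set FK : (SURIdx m pdim × Fin m) × (SURIdx m pdim × Fin m) → (SURIdx m pdim → ℝ) → ℝ :=
      fun c x => d q0 c.1 * d r0 c.2 * (x c.1.1 * x c.2.1) with hFKdef
    set GZ : (SURIdx m pdim × Fin m) × (SURIdx m pdim × Fin m) → (Fin m → ℝ) → ℝ :=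
      fun c z => (1/η₁)^2 * (w₁ (Real.sqrt (z ⬝ᵥ z)) ^ 2 * z c.1.2 * z c.2.2) with hGZdef
    have hpt : ∀ p : (SURIdx m pdim → ℝ) × (Fin m → ℝ),
        IFβ (Tmap p) q0 * IFβ (Tmap p) r0
          = ∑ c : (SURIdx m pdim × Fin m) × (SURIdx m pdim × Fin m), FK c p.1 * GZ c p.2 := by
      intro p
      rw [hIFT p q0, hIFT p r0]
      conv_rhs => rw [Fintype.sum_prod_type]
      rw [mul_mul_mul_comm, Finset.sum_mul_sum, Finset.mul_sum]
      refine Finset.sum_congr rfl fun a _ => ?_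
      rw [Finset.mul_sum]
      refine Finset.sum_congr rfl fun b _ => ?_
      simp only [hFKdef, hGZdef]
      ring
    calc (∫ p, IFβ (Tmap p) q0 * IFβ (Tmap p) r0 ∂(K.prod ν))
        = ∫ p, (∑ c : (SURIdx m pdim × Fin m) × (SURIdx m pdim × Fin m),
            FK c p.1 * GZ c p.2) ∂(K.prod ν) :=
          integral_congr_ae (Filter.Eventually.of_forall fun p => hpt p)
      _ = ∑ c : (SURIdx m pdim × Fin m) × (SURIdx m pdim × Fin m),
            ∫ p, FK c p.1 * GZ c p.2 ∂(K.prod ν) := by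
          refine integral_finset_sum _ fun c _ => ?_
          refine Integrable.mul_prod ?_ ?_
          · simp only [hFKdef]
            exact (hxint c.1.1 c.2.1).const_mul _
          · simp only [hGZdef]
            exact (hGint c.1.2 c.2.2).const_mul _
      _ = ∑ c : (SURIdx m pdim × Fin m) × (SURIdx m pdim × Fin m),
            (∫ x, FK c x ∂K) * (∫ z, GZ c z ∂ν) :=
          Finset.sum_congr rfl fun c _ => integral_prod_mul _ _
      _ = ∑ c : (SURIdx m pdim × Fin m) × (SURIdx m pdim × Fin m),
            (d q0 c.1 * d r0 c.2 * κ c.1.1 c.2.1) *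
              ((1/η₁)^2 * (if c.1.2 = c.2.2 then (1/(m:ℝ)) * α₁ else 0)) := by
          refine Finset.sum_congr rfl fun c _ => ?_
          simp only [hFKdef, hGZdef]
          rw [integral_const_mul, integral_const_mul, hGν c.1.2 c.2.2]
  -- final assembly
  ext q0 r0
  show (∫ zy, IFβ zy q0 * IFβ zy r0 ∂H) = ((α₁ / ((m : ℝ) * η₁ ^ 2)) • Ω⁻¹) q0 r0
  rw [hred q0 r0, hcore q0 r0, Matrix.smul_apply, smul_eq_mul]
  rw [Fintype.sum_prod_type]
  calc ∑ a : SURIdx m pdim × Fin m, ∑ b : SURIdx m pdim × Fin m,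
        (d q0 a * d r0 b * κ a.1 b.1) *
          ((1/η₁)^2 * (if a.2 = b.2 then (1/(m:ℝ)) * α₁ else 0))
      = ∑ a : SURIdx m pdim × Fin m, ∑ t : SURIdx m pdim,
          (d q0 a * d r0 (t, a.2) * κ a.1 t) * ((1/η₁)^2 * ((1/(m:ℝ)) * α₁)) := by
        refine Finset.sum_congr rfl fun a _ => ?_
        rw [Fintype.sum_prod_type]
        refine Finset.sum_congr rfl fun t _ => ?_
        simp only [mul_ite, mul_zero, Finset.sum_ite_eq, Finset.mem_univ, if_true]
    _ = ∑ s : SURIdx m pdim, ∑ t : SURIdx m pdim,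
          (α₁ / ((m : ℝ) * η₁ ^ 2)) * (Ω⁻¹ q0 s * (Ω s t * Ω⁻¹ t r0)) := by
        rw [Fintype.sum_prod_type]
        refine Finset.sum_congr rfl fun s _ => ?_
        rw [Finset.sum_comm]
        refine Finset.sum_congr rfl fun t _ => ?_
        have h1 : ∑ k : Fin m, (d q0 (s, k) * d r0 (t, k) * κ s t) *
            ((1/η₁)^2 * ((1/(m:ℝ)) * α₁))
            = (Ω⁻¹ q0 s * Ω⁻¹ r0 t * κ s t * ((1/η₁)^2 * ((1/(m:ℝ)) * α₁))) *
              (∑ k : Fin m, B s.1 k * B t.1 k) := by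
          rw [Finset.mul_sum]
          refine Finset.sum_congr rfl fun k _ => ?_
          simp only [hddef]
          ring
        rw [h1, hBB s.1 t.1]
        have h2 : Sig⁻¹ s.1 t.1 * κ s t = Ω s t := (hΩentry s t).symm
        have h3 : Ω⁻¹ r0 t = Ω⁻¹ t r0 := hΩis r0 t
        rw [← h2, ← h3]
        field_simp
    _ = (α₁ / ((m : ℝ) * η₁ ^ 2)) * Ω⁻¹ q0 r0 := by
        rw [← hfin q0 r0, Finset.mul_sum]
        refine Finset.sum_congr rfl fun s _ => ?_
        rw [Finset.mul_sum]
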